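/- Let X be a geodesic δ-hyperbolic metric space and let Q₁ ≠ Q₂ be two C-quasiconvex subsets of X admitting closest-point projections π_{Q₁} : X → Q₁ and π_{Q₂} : X → Q₂. Then there is a constant B, depending only on δ and C, such that for every x ∈ X: if d_X(π_{Q₁}(x), π_{Q₁}(Q₂)) > B, then d_X(π_{Q₂}(x), π_{Q₂}(Q₁)) ≤ B (here d_X(z, S) denotes the infimal distance from a point z to a set S, and π_{Q₁}(Q₂) denotes the image of Q₂ under π_{Q₁}). -/

import Mathlib

open Metric Set
open scoped Classical

noncomputable section

/-! ### Metric geometry preliminaries -/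

section MetricPrelims

variable {X : Type*} [MetricSpace X] {Y : Type*} [MetricSpace Y]

/-- A geodesic from `x` to `y`, parametrized by arclength on `[0, dist x y]`. -/
def IsGeodesicSegment (γ : ℝ → X) (x y : X) : Prop :=
  γ 0 = x ∧ γ (dist x y) = y ∧
    ∀ s ∈ Set.Icc (0 : ℝ) (dist x y), ∀ t ∈ Set.Icc (0 : ℝ) (dist x y),
      dist (γ s) (γ t) = |s - t|

/-- A geodesic metric space: any two points are joined by a geodesic. -/
def IsGeodesicSpace (X : Type*) [MetricSpace X] : Prop :=
  ∀ x y : X, ∃ γ : ℝ → X, IsGeodesicSegment γ x y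

/-- `δ`-hyperbolicity: all geodesic triangles are `δ`-thin, i.e. each side lies in the
`δ`-neighbourhood of the union of the other two sides. -/
def IsDeltaHyperbolic (X : Type*) [MetricSpace X] (δ : ℝ) : Prop :=
  ∀ (x y z : X) (γ₁ γ₂ γ₃ : ℝ → X),
    IsGeodesicSegment γ₁ x y → IsGeodesicSegment γ₂ y z → IsGeodesicSegment γ₃ x z →
    ∀ t ∈ Set.Icc (0 : ℝ) (dist x z),
      Metric.infDist (γ₃ t)
        (γ₁ '' Set.Icc (0 : ℝ) (dist x y) ∪ γ₂ '' Set.Icc (0 : ℝ) (dist y z)) ≤ δ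

/-- `C`-quasiconvexity: geodesics between points of `Q` stay in the `C`-neighbourhood of `Q`. -/
def IsQuasiconvex (C : ℝ) (Q : Set X) : Prop :=
  ∀ x ∈ Q, ∀ y ∈ Q, ∀ γ : ℝ → X, IsGeodesicSegment γ x y →
    ∀ t ∈ Set.Icc (0 : ℝ) (dist x y), Metric.infDist (γ t) Q ≤ C

/-- A closest-point projection onto a subset `Q`. -/
def IsClosestPointProj (Q : Set X) (π : X → X) : Prop :=
  (∀ x, π x ∈ Q) ∧ ∀ x : X, dist x (π x) = Metric.infDist x Q

/-- `(lam, eps)`-quasi-isometric embedding. -/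
def IsQIEmbedding (lam eps : ℝ) (f : Y → X) : Prop :=
  ∀ a b : Y, dist a b / lam - eps ≤ dist (f a) (f b) ∧ dist (f a) (f b) ≤ lam * dist a b + eps

/-- `(lam, eps)`-quasi-isometry: quasi-isometric embedding with `eps`-coarsely dense image.
A `lam`-quasi-isometry means a `(lam, lam)`-quasi-isometry. -/
def IsQuasiIsometry (lam eps : ℝ) (f : Y → X) : Prop :=
  IsQIEmbedding lam eps f ∧ ∀ x : X, ∃ y : Y, dist x (f y) ≤ eps

/-- Gromov product. -/
def gromovProd (x y w : X) : ℝ := (dist x w + dist y w - dist x y) / 2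

/-- Gromov hyperbolicity via the four-point condition (for a group with the word metric,
this is equivalent to hyperbolicity of its Cayley graph). -/
def IsGromovHyperbolic (X : Type*) [MetricSpace X] : Prop :=
  ∃ δ : ℝ, 0 ≤ δ ∧ ∀ w x y z : X,
    min (gromovProd x y w) (gromovProd y z w) - δ ≤ gromovProd x z w

/-- A discrete geodesic segment, with domain `{0, …, n}` (this is the notion of geodesic
appropriate to the vertex set of a Cayley graph). -/
def IsDiscreteGeodesicSeg (γ : ℕ → X) (n : ℕ) : Prop :=
  ∀ i, i ≤ n → ∀ j, j ≤ n → dist (γ i) (γ j) = |(i : ℝ) - (j : ℝ)|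

/-- A discrete geodesic ray. -/
def IsDiscreteGeodesicRay (γ : ℕ → X) : Prop :=
  ∀ i j : ℕ, dist (γ i) (γ j) = |(i : ℝ) - (j : ℝ)|

/-- A discrete `(k,c)`-quasi-geodesic with domain `{0, …, n}`. -/
def IsDiscreteQG (k c : ℝ) (μ : ℕ → X) (n : ℕ) : Prop :=
  ∀ i, i ≤ n → ∀ j, j ≤ n →
    |(i : ℝ) - (j : ℝ)| / k - c ≤ dist (μ i) (μ j) ∧
      dist (μ i) (μ j) ≤ k * |(i : ℝ) - (j : ℝ)| + c

/-- A discrete `(k,c)`-quasi-geodesic ray. -/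
def IsDiscreteQGRay (k c : ℝ) (α : ℕ → X) : Prop :=
  ∀ i j : ℕ,
    |(i : ℝ) - (j : ℝ)| / k - c ≤ dist (α i) (α j) ∧
      dist (α i) (α j) ≤ k * |(i : ℝ) - (j : ℝ)| + c

/-- A set `A` (e.g. the image of a geodesic) is `M`-Morse, for a Morse gauge
`M : [1,∞) × [0,∞) → [0,∞)`, if every `(k,c)`-quasi-geodesic with endpoints on `A`
lies in the `M k c`-neighbourhood of `A`. -/
def IsMorseSet (M : ℝ → ℝ → ℝ) (A : Set X) : Prop :=
  ∀ k c : ℝ, 1 ≤ k → 0 ≤ c → ∀ (n : ℕ) (μ : ℕ → X), IsDiscreteQG k c μ n →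
    μ 0 ∈ A → μ n ∈ A → ∀ i, i ≤ n → ∃ a ∈ A, dist (μ i) a ≤ M k c

/-- A continuous-parameter `θ`-quasi-geodesic segment, with domain `[0, T]`. -/
def IsQGSegReal (θ : ℝ) (α : ℝ → X) (T : ℝ) : Prop :=
  ∀ s ∈ Set.Icc (0 : ℝ) T, ∀ t ∈ Set.Icc (0 : ℝ) T,
    |s - t| / θ - θ ≤ dist (α s) (α t) ∧ dist (α s) (α t) ≤ θ * |s - t| + θ

/-- A Morse geodesic ray that is `(M, κ, L)`-incompatible: some `(k,c)`-quasi-geodesic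
with endpoints on `β|_{[0,L]}` contains a point at distance more than
`M k (c + 2κ) + 2κ` from `β`. -/
def IsIncompatibleRay (M : ℝ → ℝ → ℝ) (κ L : ℝ) (β : ℕ → X) : Prop :=
  ∃ (k c : ℝ) (n : ℕ) (μ : ℕ → X), 1 ≤ k ∧ 0 ≤ c ∧ IsDiscreteQG k c μ n ∧
    (∃ i : ℕ, (i : ℝ) ≤ L ∧ μ 0 = β i) ∧ (∃ j : ℕ, (j : ℝ) ≤ L ∧ μ n = β j) ∧
    ∃ i ≤ n, ∀ m : ℕ, M k (c + 2 * κ) + 2 * κ < dist (μ i) (β m)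

end MetricPrelims

/-! ### Finitely generated groups with word metrics, and actions on hyperbolic spaces -/

section GroupPrelims

variable {G : Type*} [Group G] [MetricSpace G]

/-- The metric on `G` is the word metric of a finite generating set. -/
def IsWordMetricGroup (G : Type*) [Group G] [MetricSpace G] : Prop :=
  ∃ S : Finset G, Subgroup.closure (S : Set G) = ⊤ ∧
    ∀ a b : G, dist a b =
      (sInf {n : ℕ | ∃ l : List G, (∀ x ∈ l, x ∈ S ∨ x⁻¹ ∈ S) ∧ a * l.prod = b ∧
        l.length = n} : ℕ)

/-- A group is virtually cyclic if it has a cyclic subgroup of finite index. -/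
def VirtuallyCyclic (G : Type*) [Group G] : Prop :=
  ∃ H : Subgroup G, H.FiniteIndex ∧ IsCyclic H

variable {X : Type*} [MetricSpace X] [MulAction G X]

/-- The image of a subset of `G` under the orbit map `g ↦ g • x₀`. -/
def orbSet (x₀ : X) (A : Set G) : Set X := (fun a : G => a • x₀) '' A

/-- An `X`-projection onto `A ⊆ G`: a retraction `π : G → A` such that `π g • x₀` is a
closest point of `A • x₀` to `g • x₀`. -/
def IsXProjection (x₀ : X) (A : Set G) (π : G → G) : Prop :=
  (∀ g : G, π g ∈ A) ∧ (∀ a ∈ A, π a = a) ∧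
    ∀ g : G, dist (g • x₀) (π g • x₀) = Metric.infDist (g • x₀) (orbSet x₀ A)

/-- `d_α(a,b)`: the diameter in `X` of `ρ(π_α(a) ∪ π_α(b))`, which for points equals the
distance between the projected orbit points. -/
def dproj (x₀ : X) (π : G → G) (a b : G) : ℝ := dist (π a • x₀) (π b • x₀)

/-- Partial Morse detectability: for every Morse gauge `M` there is `lam` such that
`M`-Morse geodesics (segments and rays) in `G` map to `lam`-quasi-geodesics in `X`
under the orbit map. -/
def PartialMorseDetectable (G : Type*) [Group G] [MetricSpace G] (X : Type*) [MetricSpace X]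
    [MulAction G X] (x₀ : X) : Prop :=
  ∀ M : ℝ → ℝ → ℝ, ∃ lam : ℝ, 1 ≤ lam ∧
    ((∀ (γ : ℕ → G) (n : ℕ), IsDiscreteGeodesicSeg γ n → IsMorseSet M (γ '' {i | i ≤ n}) →
        IsDiscreteQG lam lam (fun i => γ i • x₀) n) ∧
      (∀ γ : ℕ → G, IsDiscreteGeodesicRay γ → IsMorseSet M (Set.range γ) →
        IsDiscreteQGRay lam lam (fun i => γ i • x₀)))

/-- Quasi-isometries of `G` descend to `X`: for each `ν` there is `lam` such that every
`ν`-quasi-isometry `φ` of `G` induces a `lam`-quasi-isometry `φb` of `X` with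
`dist (φ g • x) (φb (g • x)) ≤ lam` for all `g, x`. -/
def QIsDescend (G : Type*) [Group G] [MetricSpace G] (X : Type*) [MetricSpace X]
    [MulAction G X] : Prop :=
  ∀ ν : ℝ, 1 ≤ ν → ∃ lam : ℝ, 1 ≤ lam ∧
    ∀ φ : G → G, IsQuasiIsometry ν ν φ →
      ∃ φb : X → X, IsQuasiIsometry lam lam φb ∧
        ∀ (g : G) (x : X), dist (φ g • x) (φb (g • x)) ≤ lam

/-- `g` is loxodromic for the action on `X`: `n ↦ gⁿ • x₀` is a quasi-isometric embedding
of `ℤ`. -/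
def IsLoxodromic (x₀ : X) (g : G) : Prop :=
  ∃ lam : ℝ, 1 ≤ lam ∧ ∀ m n : ℤ,
    |(m : ℝ) - (n : ℝ)| / lam - lam ≤ dist ((g ^ m) • x₀) ((g ^ n) • x₀) ∧
      dist ((g ^ m) • x₀) ((g ^ n) • x₀) ≤ lam * |(m : ℝ) - (n : ℝ)| + lam

/-- `g` satisfies the WPD condition for the action on `X`. -/
def IsWPD (X : Type*) [MetricSpace X] [MulAction G X] (g : G) : Prop :=
  ∀ κ : ℝ, 0 < κ → ∀ x : X, ∃ N : ℕ,
    {h : G | dist x (h • x) < κ ∧ dist ((g ^ N) • x) (h • (g ^ N) • x) < κ}.Finite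

/-- The elementary closure `E(g)` of a loxodromic WPD element: the set of `h ∈ G` such
that `h⟨g⟩x₀` and `⟨g⟩x₀` are at finite Hausdorff distance in `X`. -/
def elemClosure (x₀ : X) (g : G) : Set G :=
  {h : G | EMetric.hausdorffEdist
      (Set.range fun n : ℤ => (h * g ^ n) • x₀)
      (Set.range fun n : ℤ => (g ^ n) • x₀) ≠ ⊤}

end GroupPrelims

/-! ### Markov chains -/

section Markov

variable {G : Type*} [Group G] [MetricSpace G]

/-- A Markov kernel on `G`: nonnegative transition probabilities with unit row sums. -/
def IsMarkovChain (μ : G → G → ℝ) : Prop :=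
  (∀ a b : G, 0 ≤ μ a b) ∧ ∀ a : G, HasSum (μ a) 1

/-- The probability that the trajectory `(w₀ = o, w₁, …, w_n)` of the Markov chain with
kernel `μ` started at `o` satisfies the event `E`. -/
def chainProb (μ : G → G → ℝ) (o : G) (n : ℕ) (E : (Fin (n + 1) → G) → Prop) : ℝ :=
  ∑' w : Fin (n + 1) → G,
    if w 0 = o ∧ E w then ∏ i : Fin n, μ (w i.castSucc) (w i.succ) else 0

/-- A tame Markov chain: bounded jumps, non-amenability, irreducibility. -/
def TameChain (μ : G → G → ℝ) : Prop :=
  IsMarkovChain μ ∧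
  (∃ S : Finset G, ∀ a b : G, μ a b ≠ 0 → ∃ s ∈ S, b = a * s) ∧
  (∃ A r : ℝ, 0 < A ∧ 0 ≤ r ∧ r < 1 ∧ ∀ (a b : G) (n : ℕ),
      chainProb μ a n (fun w => w (Fin.last n) = b) ≤ A * r ^ n) ∧
  (∀ s : G, ∃ (eps : ℝ) (K : ℕ), 0 < eps ∧ ∀ a : G, ∃ k ≤ K,
      eps ≤ chainProb μ a k (fun w => w (Fin.last k) = a * s))

/-- A quasi-homogeneous Markov chain with constant `ν`. -/
def QuasiHomogeneous (ν : ℝ) (μ : G → G → ℝ) : Prop :=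
  ∀ p q : G, ∃ φ : G → G, Function.Bijective φ ∧ IsQuasiIsometry ν ν φ ∧ φ p = q ∧
    ∀ a b : G, μ (φ a) (φ b) = μ a b

end Markov

/-! ### BBF-type coset projections (for Proposition 5.4) -/

section Coset

variable {G : Type*} [Group G] [MetricSpace G] {X : Type*} [MetricSpace X] [MulAction G X]

/-- Projection to the coset `h·γ` built from a base projection `π₀` to `γ` by
`π_{hγ}(z) = h · π₀(h⁻¹ z)`. -/
def cosetProj (π₀ : G → Set G) (h z : G) : Set G := (fun a : G => h * a) '' π₀ (h⁻¹ * z)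

/-- `d_{hγ}(x,y)`: the diameter in `X` of `ρ(π_{hγ}(x) ∪ π_{hγ}(y))`. -/
def cosetDist (x₀ : X) (π₀ : G → Set G) (h : G) (x y : G) : ℝ :=
  Metric.diam ((fun a : G => a • x₀) '' (cosetProj π₀ h x ∪ cosetProj π₀ h y))

/-- The distance-formula sum `Σ_{H_T(o,p)}[x,y]`: the sum over cosets `hγ` (indexed by a
transversal `R`) with `d_{hγ}(o,p) ≥ T` and `π_{hγ}(x) ≠ π_{hγ}(y)` of `d_{hγ}(x,y)`. -/
def distFormulaSum (x₀ : X) (π₀ : G → Set G) (R : Set G) (T : ℝ) (o p x y : G) : ℝ :=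
  ∑' h : R, if T ≤ cosetDist x₀ π₀ (h : G) o p ∧
      cosetProj π₀ (h : G) x ≠ cosetProj π₀ (h : G) y
    then cosetDist x₀ π₀ (h : G) x y else 0

end Coset

/-! ### Geometrically faithful pairs -/

/-- The parameters of a (quasi-)geometrically faithful pair: the hyperbolicity (and
coarse-surjectivity/Lipschitz) constant `δ`, the function `ν ↦ λ` of the
"quasi-isometries descend" condition, and the functions `M ↦ λ` and `λ ↦ M` of the
Morse-detectability condition. -/
structure GFParams where
  delta : ℝ
  descend : ℝ → ℝ
  detectFwd : (ℝ → ℝ → ℝ) → ℝ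
  detectBwd : ℝ → (ℝ → ℝ → ℝ)

section Pairs

variable {G : Type*} [Group G] [MetricSpace G] {X : Type*} [MetricSpace X]

/-- Full Morse detectability for a map `ρ : G → X`, with constants governed by `P`:
`M`-Morse geodesics of `G` map to `P.detectFwd M`-quasi-geodesics, and geodesics of `G`
mapping to `lam`-quasi-geodesics are `P.detectBwd lam`-Morse. -/
def MorseDetectablePair (P : GFParams) (ρ : G → X) : Prop :=
  (∀ M : ℝ → ℝ → ℝ,
    (∀ (γ : ℕ → G) (n : ℕ), IsDiscreteGeodesicSeg γ n → IsMorseSet M (γ '' {i | i ≤ n}) →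
      IsDiscreteQG (P.detectFwd M) (P.detectFwd M) (fun i => ρ (γ i)) n) ∧
    (∀ γ : ℕ → G, IsDiscreteGeodesicRay γ → IsMorseSet M (Set.range γ) →
      IsDiscreteQGRay (P.detectFwd M) (P.detectFwd M) (fun i => ρ (γ i)))) ∧
  (∀ lam : ℝ, 1 ≤ lam →
    (∀ (γ : ℕ → G) (n : ℕ), IsDiscreteGeodesicSeg γ n →
      IsDiscreteQG lam lam (fun i => ρ (γ i)) n →
        IsMorseSet (P.detectBwd lam) (γ '' {i | i ≤ n})) ∧
    (∀ γ : ℕ → G, IsDiscreteGeodesicRay γ →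
      IsDiscreteQGRay lam lam (fun i => ρ (γ i)) → IsMorseSet (P.detectBwd lam) (Set.range γ)))

/-- A quasi-geometrically faithful pair `(G, X)` with map `ρ` and parameters `P`
(Definition "quasi-geometrically faithful pair"). -/
def IsQGFPair (P : GFParams) (G : Type*) [Group G] [MetricSpace G]
    (X : Type*) [MetricSpace X] (ρ : G → X) : Prop :=
  0 ≤ P.delta ∧ IsGeodesicSpace X ∧ IsDeltaHyperbolic X P.delta ∧
  (∀ x : X, ∃ g : G, dist x (ρ g) ≤ P.delta) ∧
  (∀ a b : G, dist (ρ a) (ρ b) ≤ P.delta * dist a b + P.delta) ∧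
  (∃ (M : ℝ → ℝ → ℝ) (γ : ℕ → G), IsDiscreteGeodesicRay γ ∧ IsMorseSet M (Set.range γ)) ∧
  (∀ ν : ℝ, 1 ≤ ν → ∀ φ : G → G, IsQuasiIsometry ν ν φ →
    ∃ φb : X → X, IsQuasiIsometry (P.descend ν) (P.descend ν) φb ∧
      ∀ g : G, dist (ρ (φ g)) (φb (ρ g)) ≤ P.descend ν) ∧
  MorseDetectablePair P ρ ∧
  (∀ r : ℝ, 0 ≤ r → ∃ R : ℝ, 0 ≤ R ∧ ∀ x y : X, R ≤ dist x y → ∀ s : ℝ, 0 ≤ s →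
    Bornology.IsBounded
      ({a : G | ∃ b : G, ρ b ∈ Metric.closedBall x r ∧ dist a b ≤ s} ∩
        ρ ⁻¹' Metric.closedBall y r))

/-- An acylindrical action of `G` on `X` (via `•`). -/
def IsAcylindricalSMul (G : Type*) [Group G] (X : Type*) [MetricSpace X] [MulAction G X] :
    Prop :=
  ∀ κ : ℝ, 0 ≤ κ → ∃ (R : ℝ) (N : ℕ), ∀ x y : X, R ≤ dist x y →
    {g : G | dist x (g • x) ≤ κ ∧ dist y (g • y) ≤ κ}.Finite ∧
    {g : G | dist x (g • x) ≤ κ ∧ dist y (g • y) ≤ κ}.ncard ≤ N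

/-- A geometrically faithful pair `(G, X)` with basepoint `x₀` and parameters `P`
(Definition "geometrically faithful pair"): `G` acts on the geodesic `P.delta`-hyperbolic
space `X` coboundedly, acylindrically, non-elementarily; quasi-isometries descend; and
Morse detectability holds (both directions), all with constants governed by `P`. -/
def IsGFPair (P : GFParams) (G : Type*) [Group G] [MetricSpace G]
    (X : Type*) [MetricSpace X] [MulAction G X] [IsIsometricSMul G X] (x₀ : X) : Prop :=
  0 ≤ P.delta ∧ IsGeodesicSpace X ∧ IsDeltaHyperbolic X P.delta ∧
  (∀ x : X, ∃ g : G, dist x (g • x₀) ≤ P.delta) ∧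
  IsAcylindricalSMul G X ∧
  (¬ Bornology.IsBounded (Set.range fun g : G => g • x₀)) ∧
  (¬ VirtuallyCyclic G) ∧
  (∀ ν : ℝ, 1 ≤ ν → ∀ φ : G → G, IsQuasiIsometry ν ν φ →
    ∃ φb : X → X, IsQuasiIsometry (P.descend ν) (P.descend ν) φb ∧
      ∀ (g : G) (x : X), dist (φ g • x) (φb (g • x)) ≤ P.descend ν) ∧
  MorseDetectablePair P (fun g : G => g • x₀)

end Pairs

/-! ### Actions given by homomorphisms to isometry groups, and acylindrical hyperbolicity -/

section HomActions

variable {G : Type*} [Group G] {Y : Type*} [MetricSpace Y]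

/-- `g` is loxodromic for the action `a` with basepoint `y₀`. -/
def IsLoxodromicHom (a : G →* (Y ≃ᵢ Y)) (y₀ : Y) (g : G) : Prop :=
  ∃ lam : ℝ, 1 ≤ lam ∧ ∀ m n : ℤ,
    |(m : ℝ) - (n : ℝ)| / lam - lam ≤ dist (a (g ^ m) y₀) (a (g ^ n) y₀) ∧
      dist (a (g ^ m) y₀) (a (g ^ n) y₀) ≤ lam * |(m : ℝ) - (n : ℝ)| + lam

/-- `g` satisfies the WPD condition for the action `a`. -/
def IsWPDHom (a : G →* (Y ≃ᵢ Y)) (g : G) : Prop :=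
  ∀ κ : ℝ, 0 < κ → ∀ y : Y, ∃ N : ℕ,
    {h : G | dist y (a h y) < κ ∧ dist (a (g ^ N) y) (a h (a (g ^ N) y)) < κ}.Finite

/-- The action `a` is acylindrical. -/
def IsAcylindricalHom (a : G →* (Y ≃ᵢ Y)) : Prop :=
  ∀ κ : ℝ, 0 ≤ κ → ∃ (R : ℝ) (N : ℕ), ∀ x y : Y, R ≤ dist x y →
    {g : G | dist x (a g x) ≤ κ ∧ dist y (a g y) ≤ κ}.Finite ∧
    {g : G | dist x (a g x) ≤ κ ∧ dist y (a g y) ≤ κ}.ncard ≤ N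

end HomActions

/-- `G` is acylindrically hyperbolic: not virtually cyclic, and admits an acylindrical
isometric action with unbounded orbits on a geodesic Gromov hyperbolic space. -/
def AcylindricallyHyperbolic (G : Type*) [Group G] : Prop :=
  ¬ VirtuallyCyclic G ∧
    ∃ (Y : Type) (_ : MetricSpace Y) (a : G →* (Y ≃ᵢ Y)),
      IsGeodesicSpace Y ∧ (∃ δ : ℝ, 0 ≤ δ ∧ IsDeltaHyperbolic Y δ) ∧
      IsAcylindricalHom a ∧
      ∃ y₀ : Y, ¬ Bornology.IsBounded (Set.range fun g : G => a g y₀)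

section Aux

variable {X : Type*} [MetricSpace X]

lemma geod_img_compact {γ : ℝ → X} {x y : X} (h : IsGeodesicSegment γ x y) :
    IsCompact (γ '' Set.Icc (0:ℝ) (dist x y)) := by
  apply IsCompact.image_of_continuousOn isCompact_Icc
  apply LipschitzOnWith.continuousOn (K := 1)
  apply LipschitzOnWith.of_dist_le_mul
  intro s hs t ht
  rw [h.2.2 s hs t ht, NNReal.coe_one, one_mul, Real.dist_eq]

lemma geod_img_nonempty {γ : ℝ → X} {x y : X} (h : IsGeodesicSegment γ x y) :
    (γ '' Set.Icc (0:ℝ) (dist x y)).Nonempty :=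
  ⟨γ 0, mem_image_of_mem _ ⟨le_refl _, dist_nonneg⟩⟩

lemma infDist_union_cases {z : X} {S T : Set X} (hS : S.Nonempty) (hT : T.Nonempty)
    {δ : ℝ} (h : infDist z (S ∪ T) ≤ δ) : infDist z S ≤ δ ∨ infDist z T ≤ δ := by
  by_contra hc
  push_neg at hc
  have hm : min (infDist z S) (infDist z T) ≤ infDist z (S ∪ T) := by
    by_contra hlt
    push_neg at hlt
    obtain ⟨y, hy, hd⟩ := (infDist_lt_iff (hS.inl)).mp hlt
    rcases hy with hy | hy
    · exact absurd (infDist_le_dist_of_mem hy)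
        (not_le.mpr (lt_of_lt_of_le hd (min_le_left _ _)))
    · exact absurd (infDist_le_dist_of_mem hy)
        (not_le.mpr (lt_of_lt_of_le hd (min_le_right _ _)))
  have := lt_min hc.1 hc.2
  linarith

lemma infDist_le_of_nbhd {S Q : Set X} {C : ℝ} (hS : S.Nonempty)
    (h : ∀ w ∈ S, infDist w Q ≤ C) (z : X) :
    infDist z Q ≤ infDist z S + C := by
  apply le_of_forall_pos_le_add
  intro ε hε
  obtain ⟨w, hw, hd⟩ := (infDist_lt_iff hS).mp
    (lt_add_of_le_of_pos (le_refl (infDist z S)) hε)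
  calc infDist z Q ≤ infDist w Q + dist z w := infDist_le_infDist_add_dist
    _ ≤ C + (infDist z S + ε) := add_le_add (h w hw) hd.le
    _ = infDist z S + C + ε := by ring

/-- clamp to [0,T] -/
lemma clamp_mem {T : ℝ} (hT : 0 ≤ T) (t : ℝ) : min (max t 0) T ∈ Set.Icc (0:ℝ) T :=
  ⟨le_min (le_max_right _ _) hT, min_le_right _ _⟩

lemma clamp_eq {T t : ℝ} (ht : t ∈ Set.Icc (0:ℝ) T) : min (max t 0) T = t := by
  rw [max_eq_left ht.1, min_eq_left ht.2]

lemma geod_clamp_continuous {γ : ℝ → X} {x y : X} (h : IsGeodesicSegment γ x y)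
    (S : Set X) : Continuous (fun t => infDist (γ (min (max t 0) (dist x y))) S) := by
  have hcl : Continuous (fun t : ℝ => min (max t 0) (dist x y)) :=
    (continuous_id.max continuous_const).min continuous_const
  have hγ : ContinuousOn γ (Set.Icc (0:ℝ) (dist x y)) := by
    apply LipschitzOnWith.continuousOn (K := 1)
    apply LipschitzOnWith.of_dist_le_mul
    intro s hs t ht
    rw [h.2.2 s hs t ht, NNReal.coe_one, one_mul, Real.dist_eq]
  exact (continuous_infDist_pt S).comp
    (hγ.comp_continuous hcl (fun t => clamp_mem dist_nonneg t))

/-- Two-closed-sets connectedness argument on [0,T]. -/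
lemma icc_meet {T : ℝ} (hT : 0 ≤ T) (f g : ℝ → ℝ) (hf : Continuous f) (hg : Continuous g)
    (c₁ c₂ : ℝ) (hcover : ∀ t ∈ Set.Icc (0:ℝ) T, f t ≤ c₁ ∨ g t ≤ c₂)
    (h0 : f 0 ≤ c₁) (hT2 : g T ≤ c₂) :
    ∃ t ∈ Set.Icc (0:ℝ) T, f t ≤ c₁ ∧ g t ≤ c₂ := by
  have hA : IsClosed {t : ℝ | f t ≤ c₁} := isClosed_le hf continuous_const
  have hB : IsClosed {t : ℝ | g t ≤ c₂} := isClosed_le hg continuous_const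
  have := isPreconnected_closed_iff.mp (isPreconnected_Icc (a := (0:ℝ)) (b := T))
    _ _ hA hB (fun t ht => hcover t ht)
    ⟨0, ⟨le_refl _, hT⟩, h0⟩ ⟨T, ⟨hT, le_refl _⟩, hT2⟩
  obtain ⟨t, ht, h1, h2⟩ := this
  exact ⟨t, ht, h1, h2⟩

variable {δ C : ℝ}

/-- Core lemma: any geodesic from `x` to a point `q ∈ Q` passes `3δ+C`-close to `π x`. -/
lemma exists_close_to_proj (hδ : 0 ≤ δ) (hC : 0 ≤ C)
    (hgeo : IsGeodesicSpace X) (hhyp : IsDeltaHyperbolic X δ)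
    {Q : Set X} (hQ : IsQuasiconvex C Q) {π : X → X} (hπ : IsClosestPointProj Q π)
    (x q : X) (hq : q ∈ Q) {γ₃ : ℝ → X} (hγ₃ : IsGeodesicSegment γ₃ x q) :
    ∃ t ∈ Set.Icc (0:ℝ) (dist x q), dist (γ₃ t) (π x) ≤ 3 * δ + C := by
  set p := π x with hp_def
  have hp : p ∈ Q := hπ.1 x
  have hdx : dist x p = infDist x Q := hπ.2 x
  obtain ⟨γ₁, hγ₁⟩ := hgeo x p
  obtain ⟨γ₂, hγ₂⟩ := hgeo p q
  set I₁ := γ₁ '' Set.Icc (0:ℝ) (dist x p) with hI₁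
  set I₂ := γ₂ '' Set.Icc (0:ℝ) (dist p q) with hI₂
  have hI₁ne : I₁.Nonempty := geod_img_nonempty hγ₁
  have hI₂ne : I₂.Nonempty := geod_img_nonempty hγ₂
  set T := dist x q with hT_def
  have hT : 0 ≤ T := dist_nonneg
  set f : ℝ → ℝ := fun t => infDist (γ₃ (min (max t 0) T)) I₁ with hf_def
  set g : ℝ → ℝ := fun t => infDist (γ₃ (min (max t 0) T)) I₂ with hg_def
  obtain ⟨t, ht, hft, hgt⟩ : ∃ t ∈ Set.Icc (0:ℝ) T, f t ≤ δ ∧ g t ≤ δ := by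
    apply icc_meet hT f g (geod_clamp_continuous hγ₃ I₁) (geod_clamp_continuous hγ₃ I₂)
    · intro t ht
      have := hhyp x p q γ₁ γ₂ γ₃ hγ₁ hγ₂ hγ₃ t ht
      simp only [hf_def, hg_def, clamp_eq ht]
      exact infDist_union_cases hI₁ne hI₂ne this
    · have h0 : min (max (0:ℝ) 0) T = 0 := clamp_eq ⟨le_refl _, hT⟩
      simp only [hf_def, h0, hγ₃.1]
      rw [← hγ₁.1]
      exact le_trans (le_of_eq (infDist_zero_of_mem
        (mem_image_of_mem _ ⟨le_refl _, dist_nonneg⟩))) hδ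
    · have h0 : min (max T 0) T = T := clamp_eq ⟨hT, le_refl _⟩
      simp only [hg_def, h0, hγ₃.2.1]
      rw [hT_def, hγ₃.2.1]
      rw [← hγ₂.2.1]
      exact le_trans (le_of_eq (infDist_zero_of_mem
        (mem_image_of_mem _ ⟨dist_nonneg, le_refl _⟩))) hδ
  rw [hf_def] at hft; rw [hg_def] at hgt
  simp only [clamp_eq ht] at hft hgt
  set z := γ₃ t with hz_def
  -- z is (δ + C)-close to Q via I₂
  have hQclose : infDist z Q ≤ δ + C := by
    have : ∀ w ∈ I₂, infDist w Q ≤ C := by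
      rintro w ⟨s, hs, rfl⟩
      exact hQ p hp q hq γ₂ hγ₂ s hs
    calc infDist z Q ≤ infDist z I₂ + C := infDist_le_of_nbhd hI₂ne this z
      _ ≤ δ + C := by linarith
  -- z is δ-close to a point u on I₁
  obtain ⟨u, hu, hdu⟩ := (geod_img_compact hγ₁).exists_infDist_eq_dist hI₁ne z
  have hdzu : dist z u ≤ δ := hdu ▸ hft
  obtain ⟨s, hs, rfl⟩ := hu
  have hxu : dist x (γ₁ s) = s := by
    have := hγ₁.2.2 0 ⟨le_refl _, dist_nonneg⟩ s hs
    rw [hγ₁.1] at this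
    rw [this, abs_sub_comm, sub_zero, abs_of_nonneg hs.1]
  have hup : dist (γ₁ s) p = dist x p - s := by
    have := hγ₁.2.2 s hs (dist x p) ⟨dist_nonneg, le_refl _⟩
    rw [hγ₁.2.1] at this
    rw [this, abs_of_nonpos (by linarith [hs.2])]
    ring
  have h1 : infDist x Q ≤ infDist (γ₁ s) Q + dist x (γ₁ s) := infDist_le_infDist_add_dist
  have h2 : infDist (γ₁ s) Q ≤ infDist z Q + dist (γ₁ s) z := infDist_le_infDist_add_dist
  rw [dist_comm] at hdzu
  have hupb : dist (γ₁ s) p ≤ 2 * δ + C := by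
    rw [hup]
    have := h2.trans (by linarith [hdzu] : infDist z Q + dist (γ₁ s) z ≤ δ + C + δ)
    rw [hxu] at h1
    linarith [hdx ▸ h1]
  refine ⟨t, ht, ?_⟩
  calc dist (γ₃ t) p ≤ dist (γ₃ t) (γ₁ s) + dist (γ₁ s) p := dist_triangle _ _ _
    _ ≤ δ + (2 * δ + C) := by rw [dist_comm] at hdzu; exact add_le_add (hdu ▸ hft) hupb
    _ = 3 * δ + C := by ring

/-- Reverse triangle inequality through the projection. -/
lemma proj_reverse_triangle (hδ : 0 ≤ δ) (hC : 0 ≤ C)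
    (hgeo : IsGeodesicSpace X) (hhyp : IsDeltaHyperbolic X δ)
    {Q : Set X} (hQ : IsQuasiconvex C Q) {π : X → X} (hπ : IsClosestPointProj Q π)
    (x q : X) (hq : q ∈ Q) :
    dist x (π x) + dist (π x) q ≤ dist x q + 2 * (3 * δ + C) := by
  obtain ⟨γ₃, hγ₃⟩ := hgeo x q
  obtain ⟨t, ht, hclose⟩ := exists_close_to_proj hδ hC hgeo hhyp hQ hπ x q hq hγ₃
  have hxt : dist x (γ₃ t) = t := by
    have := hγ₃.2.2 0 ⟨le_refl _, dist_nonneg⟩ t ht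
    rw [hγ₃.1] at this
    rw [this, abs_sub_comm, sub_zero, abs_of_nonneg ht.1]
  have htq : dist (γ₃ t) q = dist x q - t := by
    have := hγ₃.2.2 t ht (dist x q) ⟨dist_nonneg, le_refl _⟩
    rw [hγ₃.2.1] at this
    rw [this, abs_of_nonpos (by linarith [ht.2])]
    ring
  have h1 : dist x (π x) ≤ t + (3 * δ + C) := by
    calc dist x (π x) ≤ dist x (γ₃ t) + dist (γ₃ t) (π x) := dist_triangle _ _ _
      _ ≤ t + (3 * δ + C) := by rw [hxt]; linarith
  have h2 : dist (π x) q ≤ (dist x q - t) + (3 * δ + C) := by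
    calc dist (π x) q ≤ dist (π x) (γ₃ t) + dist (γ₃ t) q := dist_triangle _ _ _
      _ ≤ (3 * δ + C) + (dist x q - t) := by
          rw [dist_comm (π x), htq]; linarith
      _ = (dist x q - t) + (3 * δ + C) := by ring
  linarith

/-- If `a ∈ Q` is a closest point to `u`, then `π u` is `2(3δ+C)`-close to `a`. -/
lemma proj_near_closest (hδ : 0 ≤ δ) (hC : 0 ≤ C)
    (hgeo : IsGeodesicSpace X) (hhyp : IsDeltaHyperbolic X δ)
    {Q : Set X} (hQ : IsQuasiconvex C Q) {π : X → X} (hπ : IsClosestPointProj Q π)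
    (u a : X) (ha : a ∈ Q) (hclosest : dist u a = infDist u Q) :
    dist (π u) a ≤ 2 * (3 * δ + C) := by
  have := proj_reverse_triangle hδ hC hgeo hhyp hQ hπ u a ha
  have hu : dist u (π u) = infDist u Q := hπ.2 u
  linarith [hclosest ▸ hu ▸ this]

/-- Coarse Lipschitzness of the projection. -/
lemma proj_coarse_lipschitz (hδ : 0 ≤ δ) (hC : 0 ≤ C)
    (hgeo : IsGeodesicSpace X) (hhyp : IsDeltaHyperbolic X δ)
    {Q : Set X} (hQ : IsQuasiconvex C Q) {π : X → X} (hπ : IsClosestPointProj Q π)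
    (u v : X) : dist (π u) (π v) ≤ 2 * dist u v + 2 * (3 * δ + C) := by
  have h1 := proj_reverse_triangle hδ hC hgeo hhyp hQ hπ u (π v) (hπ.1 v)
  have h2 : dist u (π v) ≤ 2 * dist u v + dist u (π u) := by
    have hv : dist v (π v) = infDist v Q := hπ.2 v
    have : infDist v Q ≤ dist v (π u) := infDist_le_dist_of_mem (hπ.1 u)
    calc dist u (π v) ≤ dist u v + dist v (π v) := dist_triangle _ _ _
      _ ≤ dist u v + dist v (π u) := by rw [hv]; linarith
      _ ≤ dist u v + (dist v u + dist u (π u)) := by linarith [dist_triangle v u (π u)]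
      _ = 2 * dist u v + dist u (π u) := by rw [dist_comm v u]; ring
  linarith

end Aux

/-- Behrstock inequality, Lemma 2.3. For a geodesic `δ`-hyperbolic space
`X` and distinct `C`-quasiconvex subsets `Q₁ ≠ Q₂` with closest-point projections
`π₁, π₂`, there is `B = B(δ, C)` such that for all `x`: if
`d(π₁ x, π₁(Q₂)) > B` then `d(π₂ x, π₂(Q₁)) ≤ B`. -/
theorem behrstock_inequality_hyperbolic (δ C : ℝ) (hδ : 0 ≤ δ) (hC : 0 ≤ C) :
    ∃ B : ℝ, ∀ (X : Type) [inst : MetricSpace X],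
      IsGeodesicSpace X → IsDeltaHyperbolic X δ →
      ∀ (Q₁ Q₂ : Set X) (π₁ π₂ : X → X), Q₁ ≠ Q₂ →
        IsQuasiconvex C Q₁ → IsQuasiconvex C Q₂ →
        IsClosestPointProj Q₁ π₁ → IsClosestPointProj Q₂ π₂ →
        ∀ x : X, B < Metric.infDist (π₁ x) (π₁ '' Q₂) →
          Metric.infDist (π₂ x) (π₂ '' Q₁) ≤ B := by
  set D := 3 * δ + C with hD_def
  refine ⟨24 * δ + 6 * C + 2, ?_⟩
  intro X inst hgeo hhyp Q₁ Q₂ π₁ π₂ hne hQ1 hQ2 hπ1 hπ2 x hfar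
  set B := 24 * δ + 6 * C + 2 with hB_def
  set a := π₁ x with ha_def
  set p₂ := π₂ x with hp₂_def
  set b := π₁ p₂ with hb_def
  have hp₂Q : p₂ ∈ Q₂ := hπ2.1 x
  have haQ : a ∈ Q₁ := hπ1.1 x
  have hbQ : b ∈ Q₁ := hπ1.1 p₂
  have hab : B < dist a b :=
    lt_of_lt_of_le hfar (infDist_le_dist_of_mem (mem_image_of_mem π₁ hp₂Q))
  obtain ⟨γ₃, hγ₃⟩ := hgeo x p₂
  set T := dist x p₂ with hT_def
  have hT : 0 ≤ T := dist_nonneg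
  -- main claim : some point of γ₃ is (2δ+C)-close to Q₁
  have hcase : ∃ t ∈ Set.Icc (0:ℝ) T, infDist (γ₃ t) Q₁ ≤ 2 * δ + C := by
    by_contra hcon
    push_neg at hcon
    obtain ⟨γxa, hγxa⟩ := hgeo x a
    obtain ⟨γab, hγab⟩ := hgeo a b
    obtain ⟨γxb, hγxb⟩ := hgeo x b
    obtain ⟨γbp, hγbp⟩ := hgeo b p₂
    set Ixa := γxa '' Set.Icc (0:ℝ) (dist x a) with hIxa
    set Iab := γab '' Set.Icc (0:ℝ) (dist a b) with hIab
    set Ixb := γxb '' Set.Icc (0:ℝ) (dist x b) with hIxb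
    set Ibp := γbp '' Set.Icc (0:ℝ) (dist b p₂) with hIbp
    have hIxane : Ixa.Nonempty := geod_img_nonempty hγxa
    have hIabne : Iab.Nonempty := geod_img_nonempty hγab
    have hIxbne : Ixb.Nonempty := geod_img_nonempty hγxb
    have hIbpne : Ibp.Nonempty := geod_img_nonempty hγbp
    set f : ℝ → ℝ := fun t => infDist (γ₃ (min (max t 0) T)) Ixa with hf_def
    set g : ℝ → ℝ := fun t => infDist (γ₃ (min (max t 0) T)) Ibp with hg_def
    obtain ⟨t, ht, hft, hgt⟩ : ∃ t ∈ Set.Icc (0:ℝ) T, f t ≤ 2 * δ ∧ g t ≤ δ := by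
      apply icc_meet hT f g (geod_clamp_continuous hγ₃ Ixa) (geod_clamp_continuous hγ₃ Ibp)
      · intro t ht
        simp only [hf_def, hg_def, clamp_eq ht]
        have h1 := hhyp x b p₂ γxb γbp γ₃ hγxb hγbp hγ₃ t ht
        rcases infDist_union_cases hIxbne hIbpne h1 with h2 | h2
        · -- close to [x,b]; use the second triangle
          obtain ⟨w, hw, hdw⟩ := (geod_img_compact hγxb).exists_infDist_eq_dist hIxbne (γ₃ t)
          have hdzw : dist (γ₃ t) w ≤ δ := hdw ▸ h2
          obtain ⟨s, hs, rfl⟩ := hw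
          have h3 := hhyp x a b γxa γab γxb hγxa hγab hγxb s hs
          rcases infDist_union_cases hIxane hIabne h3 with h4 | h4
          · left
            calc infDist (γ₃ t) Ixa ≤ infDist (γxb s) Ixa + dist (γ₃ t) (γxb s) :=
                infDist_le_infDist_add_dist
              _ ≤ δ + δ := add_le_add h4 hdzw
              _ = 2 * δ := by ring
          · -- close to [a,b] hence to Q₁: contradiction
            exfalso
            have hIabQ : ∀ w ∈ Iab, infDist w Q₁ ≤ C := by
              rintro w ⟨r, hr, rfl⟩
              exact hQ1 a haQ b hbQ γab hγab r hr
            have : infDist (γ₃ t) Q₁ ≤ 2 * δ + C := by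
              calc infDist (γ₃ t) Q₁ ≤ infDist (γxb s) Q₁ + dist (γ₃ t) (γxb s) :=
                  infDist_le_infDist_add_dist
                _ ≤ (infDist (γxb s) Iab + C) + δ :=
                  add_le_add (infDist_le_of_nbhd hIabne hIabQ _) hdzw
                _ ≤ (δ + C) + δ := by linarith
                _ = 2 * δ + C := by ring
            exact absurd this (not_le.mpr (hcon t ht))
        · right; exact h2
      · have h0 : min (max (0:ℝ) 0) T = 0 := clamp_eq ⟨le_refl _, hT⟩
        simp only [hf_def, h0, hγ₃.1]
        rw [← hγxa.1]
        exact le_trans (le_of_eq (infDist_zero_of_mem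
          (mem_image_of_mem _ ⟨le_refl _, dist_nonneg⟩))) (by linarith)
      · have h0 : min (max T 0) T = T := clamp_eq ⟨hT, le_refl _⟩
        simp only [hg_def, h0, hγ₃.2.1]
        rw [hT_def, hγ₃.2.1]
        rw [← hγbp.2.1]
        exact le_trans (le_of_eq (infDist_zero_of_mem
          (mem_image_of_mem _ ⟨dist_nonneg, le_refl _⟩))) hδ
    rw [hf_def] at hft; rw [hg_def] at hgt
    simp only [clamp_eq ht] at hft hgt
    set z := γ₃ t with hz_def
    obtain ⟨u, hu, hduu⟩ := (geod_img_compact hγxa).exists_infDist_eq_dist hIxane z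
    obtain ⟨w, hw, hdww⟩ := (geod_img_compact hγbp).exists_infDist_eq_dist hIbpne z
    have hdzu : dist z u ≤ 2 * δ := hduu ▸ hft
    have hdzw : dist z w ≤ δ := hdww ▸ hgt
    obtain ⟨s, hs, rfl⟩ := hu
    obtain ⟨r, hr, rfl⟩ := hw
    -- a is a closest point of Q₁ to u = γxa s
    have hua : dist (γxa s) a = infDist (γxa s) Q₁ := by
      have hxu : dist x (γxa s) = s := by
        have := hγxa.2.2 0 ⟨le_refl _, dist_nonneg⟩ s hs
        rw [hγxa.1] at this
        rw [this, abs_sub_comm, sub_zero, abs_of_nonneg hs.1]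
      have hus : dist (γxa s) a = dist x a - s := by
        have := hγxa.2.2 s hs (dist x a) ⟨dist_nonneg, le_refl _⟩
        rw [hγxa.2.1] at this
        rw [this, abs_of_nonpos (by linarith [hs.2])]; ring
      have h1 : infDist x Q₁ ≤ infDist (γxa s) Q₁ + dist x (γxa s) :=
        infDist_le_infDist_add_dist
      have h2 : infDist (γxa s) Q₁ ≤ dist (γxa s) a := infDist_le_dist_of_mem haQ
      have hxa : dist x a = infDist x Q₁ := hπ1.2 x
      rw [hxu] at h1
      rw [hus]
      linarith [hxa ▸ h1, hus ▸ h2]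
    -- b is a closest point of Q₁ to w = γbp r
    have hwb : dist (γbp r) b = infDist (γbp r) Q₁ := by
      have hbw : dist b (γbp r) = r := by
        have := hγbp.2.2 0 ⟨le_refl _, dist_nonneg⟩ r hr
        rw [hγbp.1] at this
        rw [this, abs_sub_comm, sub_zero, abs_of_nonneg hr.1]
      have hwp : dist (γbp r) p₂ = dist b p₂ - r := by
        have := hγbp.2.2 r hr (dist b p₂) ⟨dist_nonneg, le_refl _⟩
        rw [hγbp.2.1] at this
        rw [this, abs_of_nonpos (by linarith [hr.2])]; ring
      have h1 : infDist p₂ Q₁ ≤ infDist (γbp r) Q₁ + dist p₂ (γbp r) :=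
        infDist_le_infDist_add_dist
      have h2 : infDist (γbp r) Q₁ ≤ dist (γbp r) b := infDist_le_dist_of_mem hbQ
      have hpb : dist p₂ b = infDist p₂ Q₁ := hπ1.2 p₂
      rw [dist_comm p₂ (γbp r), hwp] at h1
      rw [dist_comm (γbp r) b, hbw]
      rw [dist_comm (γbp r) b, hbw] at h2
      linarith [hpb ▸ h1, dist_comm p₂ b]
    have hu2 : dist (π₁ (γxa s)) a ≤ 2 * D :=
      proj_near_closest hδ hC hgeo hhyp hQ1 hπ1 (γxa s) a haQ hua
    have hw2 : dist (π₁ (γbp r)) b ≤ 2 * D :=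
      proj_near_closest hδ hC hgeo hhyp hQ1 hπ1 (γbp r) b hbQ hwb
    have huw : dist (γxa s) (γbp r) ≤ 3 * δ := by
      calc dist (γxa s) (γbp r) ≤ dist (γxa s) z + dist z (γbp r) :=
          dist_triangle _ _ _
        _ ≤ 2 * δ + δ := add_le_add (by rw [dist_comm]; exact hdzu) hdzw
        _ = 3 * δ := by ring
    have hlip : dist (π₁ (γxa s)) (π₁ (γbp r)) ≤ 2 * (3 * δ) + 2 * D := by
      have := proj_coarse_lipschitz hδ hC hgeo hhyp hQ1 hπ1 (γxa s) (γbp r)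
      linarith
    have : dist a b ≤ 6 * D + 6 * δ := by
      calc dist a b ≤ dist a (π₁ (γxa s)) + dist (π₁ (γxa s)) b := dist_triangle _ _ _
        _ ≤ dist a (π₁ (γxa s)) + (dist (π₁ (γxa s)) (π₁ (γbp r)) + dist (π₁ (γbp r)) b) :=
            by linarith [dist_triangle (π₁ (γxa s)) (π₁ (γbp r)) b]
        _ ≤ 2 * D + ((2 * (3 * δ) + 2 * D) + 2 * D) := by
            rw [dist_comm a (π₁ (γxa s))]
            exact add_le_add hu2 (add_le_add hlip hw2)
        _ = 6 * D + 6 * δ := by ring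
    rw [hD_def] at this
    linarith
  -- case (i): finish
  obtain ⟨t, ht, hclose⟩ := hcase
  set z := γ₃ t with hz_def
  have hQ1ne : Q₁.Nonempty := ⟨a, haQ⟩
  obtain ⟨q₁, hq₁, hdzq⟩ := (infDist_lt_iff hQ1ne).mp
    (lt_of_le_of_lt hclose (by linarith : 2 * δ + C < 2 * δ + C + 1))
  -- p₂ is a closest point of Q₂ to z
  have hzp : dist z p₂ = infDist z Q₂ := by
    have hxz : dist x z = t := by
      have := hγ₃.2.2 0 ⟨le_refl _, dist_nonneg⟩ t ht
      rw [hγ₃.1] at this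
      rw [hz_def, this, abs_sub_comm, sub_zero, abs_of_nonneg ht.1]
    have hzp2 : dist z p₂ = T - t := by
      have := hγ₃.2.2 t ht T ⟨dist_nonneg, le_refl _⟩
      rw [hγ₃.2.1] at this
      rw [hz_def, this, abs_of_nonpos (by linarith [ht.2])]; ring
    have h1 : infDist x Q₂ ≤ infDist z Q₂ + dist x z := infDist_le_infDist_add_dist
    have h2 : infDist z Q₂ ≤ dist z p₂ := infDist_le_dist_of_mem hp₂Q
    have hxp : dist x p₂ = infDist x Q₂ := hπ2.2 x
    rw [hxz] at h1
    rw [hzp2]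
    rw [hzp2] at h2
    linarith [hxp ▸ h1]
  have hz2 : dist (π₂ z) p₂ ≤ 2 * D :=
    proj_near_closest hδ hC hgeo hhyp hQ2 hπ2 z p₂ hp₂Q hzp
  have hlip : dist (π₂ z) (π₂ q₁) ≤ 2 * (2 * δ + C + 1) + 2 * D := by
    have := proj_coarse_lipschitz hδ hC hgeo hhyp hQ2 hπ2 z q₁
    linarith
  have hfinal : dist p₂ (π₂ q₁) ≤ 4 * D + 2 * (2 * δ + C + 1) := by
    calc dist p₂ (π₂ q₁) ≤ dist p₂ (π₂ z) + dist (π₂ z) (π₂ q₁) := dist_triangle _ _ _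
      _ ≤ 2 * D + (2 * (2 * δ + C + 1) + 2 * D) := by
          rw [dist_comm p₂ (π₂ z)]; exact add_le_add hz2 hlip
      _ = 4 * D + 2 * (2 * δ + C + 1) := by ring
  have : infDist (π₂ x) (π₂ '' Q₁) ≤ dist p₂ (π₂ q₁) :=
    infDist_le_dist_of_mem (mem_image_of_mem π₂ hq₁)
  rw [hD_def] at hfinal
  linarith
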